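/- (Theorem 1, achievability, low-loss regime.) For every γ ∈ (1/√2, 1], the triple Π₀ = |Ψ⁺⟩⟨Ψ⁺| + (γ²−1/2)(|Φ⁺⟩⟨Φ⁺| + |Φ⁻⟩⟨Φ⁻|), Π₁ = |Ψ⁻⟩⟨Ψ⁻| + (γ²−1/2)(|Φ⁺⟩⟨Φ⁺| + |Φ⁻⟩⟨Φ⁻|), Π_∅ = 2(1−γ²)(|Φ⁺⟩⟨Φ⁺| + |Φ⁻⟩⟨Φ⁻|) is γ-admissible and attains V = (1/2)·Tr[ρ₀Π₀ + ρ₁Π₁] = (2γ² + 1/√2)/4. -/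

import Mathlib

open Matrix Complex Kronecker BigOperators ComplexOrder

noncomputable section

abbrev Mat2 := Matrix (Fin 2) (Fin 2) ℂ
abbrev Mat4 := Matrix (Fin 2 × Fin 2) (Fin 2 × Fin 2) ℂ

/-- Pauli X matrix -/
def PX : Mat2 := !![0, 1; 1, 0]

/-- Pauli Y matrix -/
def PY : Mat2 := !![0, -Complex.I; Complex.I, 0]

/-- sign (−1)^b for a bit b -/
def bsign (b : Bool) : ℂ := if b then -1 else 1

/-- boolean function f(x̄,ȳ) = (x₁·y₁) XOR x₂ XOR y₂ -/
def fxy (x y : Bool × Bool) : Bool := (((x.1 && y.1)).xor x.2).xor y.2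

/-- qubit input states ω_{x̄}: ω_{(0,x₂)} = (I+(−1)^{x₂}X)/2, ω_{(1,x₂)} = (I+(−1)^{x₂}Y)/2 -/
def omg (x : Bool × Bool) : Mat2 :=
  (1/2 : ℂ) • ((1 : Mat2) + bsign x.2 • (if x.1 then PY else PX))

/-- qubit input states τ_{ȳ} = (I+(−1)^{y₂}(X+(−1)^{y₁}Y)/√2)/2 -/
def tau (y : Bool × Bool) : Mat2 :=
  (1/2 : ℂ) • ((1 : Mat2) + (bsign y.2 / (Real.sqrt 2 : ℂ)) • (PX + bsign y.1 • PY))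

/-- averaged input states ρ₀ (for c = false) and ρ₁ (for c = true) -/
def rho (c : Bool) : Mat4 :=
  (1/8 : ℂ) • ∑ x : Bool × Bool, ∑ y : Bool × Bool,
    (if fxy x y = c then omg x ⊗ₖ tau y else 0)

/-- standard basis vectors of ℂ⁴ ≅ ℂ² ⊗ ℂ² -/
def ket (i j : Fin 2) : (Fin 2 × Fin 2) → ℂ := fun p => if p = (i, j) then 1 else 0

def PhiP : (Fin 2 × Fin 2) → ℂ := fun p => (1 / (Real.sqrt 2 : ℂ)) * (ket 0 0 p + ket 1 1 p)
def PhiM : (Fin 2 × Fin 2) → ℂ := fun p => (1 / (Real.sqrt 2 : ℂ)) * (ket 0 0 p - ket 1 1 p)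
def PsiP : (Fin 2 × Fin 2) → ℂ := fun p => (1 / (Real.sqrt 2 : ℂ)) * (ket 0 1 p + ket 1 0 p)
def PsiM : (Fin 2 × Fin 2) → ℂ := fun p => (1 / (Real.sqrt 2 : ℂ)) * (ket 0 1 p - ket 1 0 p)

/-- rank one projector |v⟩⟨v| -/
def proj (v : (Fin 2 × Fin 2) → ℂ) : Mat4 := Matrix.vecMulVec v (star v)

/-- a γ-admissible measurement triple -/
def Admissible (γ : ℝ) (P0 P1 Pe : Mat4) : Prop :=
  P0.PosSemidef ∧ P1.PosSemidef ∧ Pe.PosSemidef ∧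
  P0 + P1 + Pe = 1 ∧
  ∀ x y : Bool × Bool, ((omg x ⊗ₖ tau y) * Pe).trace = 1 - (γ : ℂ)^2

/-- guessing value V = (1/2)·Tr[ρ₀Π₀ + ρ₁Π₁] (a real number) -/
def Gval (P0 P1 : Mat4) : ℝ := (1/2) * ((rho false * P0 + rho true * P1).trace).re

/-- achievability, low-loss regime: for γ ∈ (1/√2, 1], the stated triple
is γ-admissible and attains V = (2γ² + 1/√2)/4. -/

lemma proj_psd (v : (Fin 2 × Fin 2) → ℂ) : (proj v).PosSemidef := by
  have : proj v = replicateCol Unit v * (replicateCol Unit v)ᴴ := by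
    rw [proj, vecMulVec_eq Unit, conjTranspose_replicateCol]
  rw [this]
  exact posSemidef_self_mul_conjTranspose _

lemma smul_psd {M : Mat4} (hM : M.PosSemidef) {c : ℝ} (hc : 0 ≤ c) : (c • M).PosSemidef := by
  constructor
  · ext i j
    simp only [conjTranspose_apply, Matrix.smul_apply, star_smul, star_trivial]
    rw [← conjTranspose_apply, hM.1]
  · intro x
    have h := hM.2 x
    exact (hM.smul hc).2 x

lemma hs : (Real.sqrt 2 : ℂ) * (Real.sqrt 2 : ℂ) = 2 := by
  rw [← Complex.ofReal_mul, Real.mul_self_sqrt (by norm_num)]; norm_num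

lemma hinv2 : ((Real.sqrt 2 : ℂ))⁻¹ ^ 2 = (2:ℂ)⁻¹ := by
  rw [sq, ← mul_inv, hs]

lemma hs0 : (Real.sqrt 2 : ℂ) ≠ 0 := by
  exact Complex.ofReal_ne_zero.mpr (by positivity)

/-- D = |00><00| + |11><11| -/

def Dm : Mat4 := fun p q => if p = q ∧ p.1 = p.2 then 1 else 0
/-- S = |01><01| + |10><10| -/

def Sm : Mat4 := fun p q => if p = q ∧ p.1 ≠ p.2 then 1 else 0

lemma Dm_eq : proj PhiP + proj PhiM = Dm := by
  ext ⟨a,b⟩ ⟨c,d⟩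
  fin_cases a <;> fin_cases b <;> fin_cases c <;> fin_cases d <;>
    simp [proj, Dm, vecMulVec_apply, PhiP, PhiM, ket, Prod.ext_iff, div_mul_div_comm, hs, hinv2] <;> (try ring_nf) <;> (try rw [hinv2]) <;> norm_num

def Pp : Mat4 := fun p q => if p.1 ≠ p.2 ∧ q.1 ≠ q.2 then 1/2 else 0

def Pm : Mat4 := fun p q => if p.1 ≠ p.2 ∧ q.1 ≠ q.2 then (if p = q then 1/2 else -(1/2)) else 0

lemma Pp_eq : proj PsiP = Pp := by
  ext ⟨a,b⟩ ⟨c,d⟩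
  fin_cases a <;> fin_cases b <;> fin_cases c <;> fin_cases d <;>
    simp [proj, Pp, vecMulVec_apply, PsiP, ket, Prod.ext_iff, div_mul_div_comm, hs, hinv2] <;>
    (try ring_nf) <;> (try rw [hinv2]) <;> norm_num

lemma Pm_eq : proj PsiM = Pm := by
  ext ⟨a,b⟩ ⟨c,d⟩
  fin_cases a <;> fin_cases b <;> fin_cases c <;> fin_cases d <;>
    simp [proj, Pm, vecMulVec_apply, PsiM, ket, Prod.ext_iff, div_mul_div_comm, hs, hinv2] <;>
    (try ring_nf) <;> (try rw [hinv2]) <;> norm_num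

def Rm (c : Bool) : Mat4 := fun p q =>
  if p = q then 1/4 else
  if p.1 ≠ p.2 ∧ q.1 ≠ q.2 then bsign c / (4 * (Real.sqrt 2:ℂ)) else 0

lemma omg_apply (x : Bool × Bool) : ∀ i j, omg x i j =
    !![1/2, bsign x.2 * (if x.1 then -Complex.I else 1) / 2;
       bsign x.2 * (if x.1 then Complex.I else 1) / 2, 1/2] i j := by
  rcases x with ⟨x1, x2⟩
  cases x1 <;> cases x2 <;> intro i j <;> fin_cases i <;> fin_cases j <;>
    simp [omg, PX, PY, bsign, Matrix.one_apply] <;> ring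

lemma tau_apply (y : Bool × Bool) : ∀ i j, tau y i j =
    !![1/2, bsign y.2 * (1 - bsign y.1 * Complex.I) / (2 * (Real.sqrt 2:ℂ));
       bsign y.2 * (1 + bsign y.1 * Complex.I) / (2 * (Real.sqrt 2:ℂ)), 1/2] i j := by
  rcases y with ⟨y1, y2⟩
  cases y1 <;> cases y2 <;> intro i j <;> fin_cases i <;> fin_cases j <;>
    simp [tau, PX, PY, bsign, Matrix.one_apply] <;> ring

set_option maxHeartbeats 2000000 in
lemma rho_eq (c : Bool) : rho c = Rm c := by
  cases c <;> (
    ext ⟨a,b⟩ ⟨c',d⟩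
    fin_cases a <;> fin_cases b <;> fin_cases c' <;> fin_cases d <;> (
      rw [rho]
      simp only [Fintype.sum_prod_type, Fintype.sum_bool, Matrix.smul_apply,
        Finset.sum_apply, Matrix.kroneckerMap_apply, Matrix.zero_apply]
      norm_num [fxy, omg_apply, tau_apply, bsign, Rm, Prod.ext_iff]
      try ring_nf
      try simp [Complex.I_sq]
      try ring_nf))

lemma trRP : (Rm false * Pp).trace = 1/4 + 1/(4*(Real.sqrt 2:ℂ)) := by
  simp [Matrix.trace, Matrix.mul_apply, Fintype.sum_prod_type, Fin.sum_univ_two,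
    Rm, Pp, Prod.ext_iff, bsign]
  ring

lemma trRM : (Rm true * Pm).trace = 1/4 + 1/(4*(Real.sqrt 2:ℂ)) := by
  simp [Matrix.trace, Matrix.mul_apply, Fintype.sum_prod_type, Fin.sum_univ_two,
    Rm, Pm, Prod.ext_iff, bsign]
  ring

lemma trRD (c : Bool) : (Rm c * Dm).trace = 1/2 := by
  simp [Matrix.trace, Matrix.mul_apply, Fintype.sum_prod_type, Fin.sum_univ_two,
    Rm, Dm, Prod.ext_iff, bsign]
  ring

lemma trOT (x y : Bool × Bool) : ((omg x ⊗ₖ tau y) * Dm).trace = 1/2 := by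
  simp [Matrix.trace, Matrix.mul_apply, Fintype.sum_prod_type, Fin.sum_univ_two,
    Dm, Prod.ext_iff, omg_apply, tau_apply]
  norm_num

lemma sum_one : Pp + Pm + Dm = (1 : Mat4) := by
  ext ⟨a,b⟩ ⟨c,d⟩
  fin_cases a <;> fin_cases b <;> fin_cases c <;> fin_cases d <;>
    simp [Pp, Pm, Dm, Matrix.one_apply, Prod.ext_iff] <;> norm_num

theorem guessing_achievable_low_loss (γ : ℝ) (hγ : 1/Real.sqrt 2 < γ) (hγ' : γ ≤ 1) :
    Admissible γ
      (proj PsiP + (γ^2 - 1/2 : ℝ) • (proj PhiP + proj PhiM))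
      (proj PsiM + (γ^2 - 1/2 : ℝ) • (proj PhiP + proj PhiM))
      ((2*(1 - γ^2) : ℝ) • (proj PhiP + proj PhiM)) ∧
    Gval (proj PsiP + (γ^2 - 1/2 : ℝ) • (proj PhiP + proj PhiM))
         (proj PsiM + (γ^2 - 1/2 : ℝ) • (proj PhiP + proj PhiM))
      = (2*γ^2 + 1/Real.sqrt 2)/4 := by
  have h2 : (0:ℝ) < Real.sqrt 2 := Real.sqrt_pos.mpr (by norm_num)
  have hγ0 : 0 < γ := lt_trans (by positivity) hγ
  have hhalf : (1/Real.sqrt 2 : ℝ)^2 = 1/2 := by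
    rw [div_pow, one_pow, Real.sq_sqrt] <;> norm_num
  have hc1 : (0:ℝ) ≤ γ^2 - 1/2 := by
    have := pow_le_pow_left₀ (by positivity) hγ.le 2
    rw [hhalf] at this; linarith
  have hc2 : (0:ℝ) ≤ 2*(1-γ^2) := by nlinarith
  have hDpsd : (proj PhiP + proj PhiM).PosSemidef := (proj_psd PhiP).add (proj_psd PhiM)
  refine ⟨⟨(proj_psd PsiP).add (smul_psd hDpsd hc1),
          (proj_psd PsiM).add (smul_psd hDpsd hc1),
          smul_psd hDpsd hc2, ?_, ?_⟩, ?_⟩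
  · rw [Pp_eq, Pm_eq, Dm_eq]
    have key : Pp + (γ^2 - 1/2 : ℝ) • Dm + (Pm + (γ^2 - 1/2 : ℝ) • Dm) + (2*(1-γ^2) : ℝ) • Dm
        = (Pp + Pm + Dm) + (((γ^2 - 1/2) + (γ^2 - 1/2) + 2*(1-γ^2) - 1 : ℝ) • Dm) := by
      module
    rw [key, sum_one]
    have hz : (γ^2 - 1/2) + (γ^2 - 1/2) + 2*(1-γ^2) - 1 = (0:ℝ) := by ring
    rw [hz, zero_smul, add_zero]
  · intro x y
    rw [Dm_eq, Matrix.mul_smul, Matrix.trace_smul, trOT x y]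
    push_cast [Complex.real_smul]
    ring
  · rw [Gval, rho_eq, rho_eq, Pp_eq, Pm_eq, Dm_eq]
    have expand : (Rm false * (Pp + (γ^2 - 1/2 : ℝ) • Dm)
        + Rm true * (Pm + (γ^2 - 1/2 : ℝ) • Dm)).trace
        = (Rm false * Pp).trace + (Rm true * Pm).trace
          + ((γ^2 - 1/2 : ℝ) • ((Rm false * Dm).trace + (Rm true * Dm).trace)) := by
      simp [Matrix.mul_add, Matrix.mul_smul, Matrix.trace_add, Matrix.trace_smul]
      ring
    rw [expand, trRP, trRM, trRD, trRD]
    have : (1/4 + 1/(4*(Real.sqrt 2:ℂ)) + (1/4 + 1/(4*(Real.sqrt 2:ℂ)))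
        + (γ^2 - 1/2 : ℝ) • ((1/2 : ℂ) + 1/2))
        = (((γ:ℝ)^2 + 1/(2*Real.sqrt 2) : ℝ) : ℂ) := by
      push_cast [Complex.real_smul]
      have : ((Real.sqrt 2 : ℝ) : ℂ) ≠ 0 := hs0
      field_simp
      ring
    rw [this, Complex.ofReal_re]
    have hne : Real.sqrt 2 ≠ 0 := h2.ne'
    field_simp
    ring
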